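/- For all integers n ≥ m ≥ 1 with n even, there exists a 3-edge-coloring of the complete graph on 5n/2 vertices that contains no rainbow triangle and no monochromatic copy of the double star S(n,m). -/

import Mathlib

open Finset

/-- A symmetric edge-coloring of a complete graph, given as a function on ordered
pairs of vertices. -/
def IsSymmColoring {V C : Type*} (c : V → V → C) : Prop := ∀ u v, c u v = c v u

/-- The coloring `c` contains a rainbow triangle: three vertices whose three
connecting edges get three distinct colors. -/
def HasRainbowTriangle {V C : Type*} (c : V → V → C) : Prop :=
  ∃ u v w : V, u ≠ v ∧ u ≠ w ∧ v ≠ w ∧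
    c u v ≠ c u w ∧ c u v ≠ c v w ∧ c u w ≠ c v w

/-- The coloring `c` contains a monochromatic triangle. -/
def HasMonoTriangle {V C : Type*} (c : V → V → C) : Prop :=
  ∃ u v w : V, u ≠ v ∧ u ≠ w ∧ v ≠ w ∧ c u v = c u w ∧ c u v = c v w

/-- The coloring `c` contains a monochromatic copy of the double star `S(n,m)`:
two adjacent centers `u, v`, a set `A` of `n` further leaves at `u` and a set `B`
of `m` further leaves at `v`, all edges in one color. -/
def HasMonoDoubleStar {V C : Type*} (c : V → V → C) (n m : ℕ) : Prop :=
  ∃ (u v : V) (A B : Finset V) (col : C),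
    u ≠ v ∧ A.card = n ∧ B.card = m ∧ Disjoint A B ∧
    u ∉ A ∧ u ∉ B ∧ v ∉ A ∧ v ∉ B ∧
    c u v = col ∧ (∀ a ∈ A, c u a = col) ∧ (∀ b ∈ B, c v b = col)

/-- Every `k`-edge-coloring of the complete graph on `N` vertices contains a
rainbow triangle or a monochromatic `S(n,m)` (so `gr_k(K_3 : S(n,m)) ≤ N`). -/
def grHolds (k n m N : ℕ) : Prop :=
  ∀ c : Fin N → Fin N → Fin k, IsSymmColoring c →
    HasRainbowTriangle c ∨ HasMonoDoubleStar c n m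

/-- There is a `k`-edge-coloring of the complete graph on `N` vertices with no
rainbow triangle and no monochromatic `S(n,m)` (so `gr_k(K_3 : S(n,m)) > N`). -/
def grAvoid (k n m N : ℕ) : Prop :=
  ∃ c : Fin N → Fin N → Fin k, IsSymmColoring c ∧
    ¬ HasRainbowTriangle c ∧ ¬ HasMonoDoubleStar c n m

def dsF (a b : ZMod 5) : Fin 3 :=
  if a = b then 2 else if b = a + 1 ∨ b = a - 1 then 0 else 1

lemma dsF_symm : ∀ a b : ZMod 5, dsF a b = dsF b a := by decide
lemma dsF_tri : ∀ a b c : ZMod 5,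
    dsF a b = dsF a c ∨ dsF a b = dsF b c ∨ dsF a c = dsF b c := by decide
lemma dsF_zero : ∀ a b : ZMod 5, dsF a b = 0 → b = a + 1 ∨ b = a - 1 := by decide
lemma dsF_one : ∀ a b : ZMod 5, dsF a b = 1 → b = a + 2 ∨ b = a - 2 := by decide
lemma dsF_two : ∀ a b : ZMod 5, dsF a b = 2 → b = a := by decide

lemma dsFiber (K j : ℕ) (hK : 0 < K) (hj : j < 5) :
    (univ.filter fun x : Fin (5*K) => x.val / K = j).card = K := by
  have : (univ.filter fun x : Fin (5*K) => x.val / K = j)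
      = Finset.map ⟨fun y : Fin K => (⟨j*K + y.val, by
          calc j*K + y.val < j*K + K := by omega
          _ = (j+1)*K := by ring
          _ ≤ 5*K := Nat.mul_le_mul_right K (by omega)⟩ : Fin (5*K)),
        by intro a b h; simpa [Fin.ext_iff] using h⟩ univ := by
    ext x
    simp only [mem_filter, mem_univ, true_and, Finset.mem_map, Function.Embedding.coeFn_mk,
      Fin.ext_iff]
    constructor
    · intro h
      refine ⟨⟨x.val % K, Nat.mod_lt _ hK⟩, ?_⟩
      have h2 := Nat.div_add_mod x.val K
      rw [h, Nat.mul_comm] at h2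
      show j*K + x.val % K = x.val
      omega
    · rintro ⟨y, hy⟩
      have hy' : x.val = j*K + y.val := hy.symm
      rw [hy', Nat.mul_comm j K, Nat.mul_add_div hK, Nat.div_eq_of_lt y.isLt, Nat.add_zero]
  rw [this, Finset.card_map, Finset.card_univ, Fintype.card_fin]

def dsPart (K : ℕ) (x : Fin (5*K)) : ZMod 5 := ((x.val / K : ℕ) : ZMod 5)

lemma dsPart_eq_iff (K : ℕ) (hK : 0 < K) (x : Fin (5*K)) (a : ZMod 5) :
    dsPart K x = a ↔ x.val / K = a.val := by
  have hlt : x.val / K < 5 := by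
    have := x.isLt
    exact Nat.div_lt_of_lt_mul (by omega)
  constructor
  · intro h
    have := congrArg ZMod.val h
    rwa [dsPart, ZMod.val_natCast, Nat.mod_eq_of_lt hlt] at this
  · intro h
    rw [dsPart, h]
    simp [ZMod.natCast_val, ZMod.cast_id]

lemma dsPartFiber (K : ℕ) (hK : 0 < K) (a : ZMod 5) :
    (univ.filter fun x : Fin (5*K) => dsPart K x = a).card = K := by
  rw [show (univ.filter fun x : Fin (5*K) => dsPart K x = a)
      = univ.filter fun x : Fin (5*K) => x.val / K = a.val from by
    apply Finset.filter_congr; intro x _; simp [dsPart_eq_iff K hK]]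
  exact dsFiber K a.val hK (ZMod.val_lt a)

def dsCol (K : ℕ) (x y : Fin (5*K)) : Fin 3 := dsF (dsPart K x) (dsPart K y)

/-- For n ≥ m ≥ 1, n even: a rainbow-triangle-free 3-coloring of `K_{5n/2}`
with no monochromatic `S(n,m)`. -/
theorem stmt_1 (n m : ℕ) (hm : 1 ≤ m) (hmn : m ≤ n) (hn : Even n) :
    grAvoid 3 n m (5 * (n / 2)) := by
  obtain ⟨r, hr⟩ := hn
  set K := n / 2 with hKdef
  have hnk : n = 2 * K := by omega
  have hK : 0 < K := by omega
  refine ⟨dsCol K, fun u v => dsF_symm _ _, ?_, ?_⟩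
  · rintro ⟨u, v, w, -, -, -, h1, h2, h3⟩
    rcases dsF_tri (dsPart K u) (dsPart K v) (dsPart K w) with h | h | h
    · exact h1 h
    · exact h2 h
    · exact h3 h
  · rintro ⟨u, v, A, B, col, huv, hA, hB, -, huA, -, hvA, -, hcuv, hAcol, -⟩
    set S := insert v A with hSdef
    have hScard : S.card = n + 1 := by
      rw [hSdef, Finset.card_insert_of_notMem hvA, hA]
    have hSmem : ∀ x ∈ S, dsCol K u x = col ∧ x ≠ u := by
      intro x hx
      rcases Finset.mem_insert.mp hx with rfl | hx
      · exact ⟨hcuv, Ne.symm huv⟩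
      · exact ⟨hAcol x hx, fun h => huA (h ▸ hx)⟩
    fin_cases col
    · -- color 0
      have hsub : S ⊆ (univ.filter fun x => dsPart K x = dsPart K u + 1)
          ∪ (univ.filter fun x => dsPart K x = dsPart K u - 1) := by
        intro x hx
        obtain ⟨hc, -⟩ := hSmem x hx
        rcases dsF_zero _ _ hc with h | h <;>
          simp [Finset.mem_union, Finset.mem_filter, h]
      have h1 := Finset.card_le_card hsub
      have h2 := Finset.card_union_le
        (univ.filter fun x : Fin (5*K) => dsPart K x = dsPart K u + 1)
        (univ.filter fun x : Fin (5*K) => dsPart K x = dsPart K u - 1)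
      rw [dsPartFiber K hK, dsPartFiber K hK] at h2
      omega
    · -- color 1
      have hsub : S ⊆ (univ.filter fun x => dsPart K x = dsPart K u + 2)
          ∪ (univ.filter fun x => dsPart K x = dsPart K u - 2) := by
        intro x hx
        obtain ⟨hc, -⟩ := hSmem x hx
        rcases dsF_one _ _ hc with h | h <;>
          simp [Finset.mem_union, Finset.mem_filter, h]
      have h1 := Finset.card_le_card hsub
      have h2 := Finset.card_union_le
        (univ.filter fun x : Fin (5*K) => dsPart K x = dsPart K u + 2)
        (univ.filter fun x : Fin (5*K) => dsPart K x = dsPart K u - 2)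
      rw [dsPartFiber K hK, dsPartFiber K hK] at h2
      omega
    · -- color 2
      have hsub : S ⊆ (univ.filter fun x => dsPart K x = dsPart K u).erase u := by
        intro x hx
        obtain ⟨hc, hxu⟩ := hSmem x hx
        rw [Finset.mem_erase]
        exact ⟨hxu, by simp [dsF_two _ _ hc]⟩
      have h1 := Finset.card_le_card hsub
      have h2 : ((univ.filter fun x : Fin (5*K) => dsPart K x = dsPart K u).erase u).card
          = K - 1 := by
        rw [Finset.card_erase_of_mem (by simp), dsPartFiber K hK]
      omega
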